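/- Let T be a clique tree of a chordal claw-free graph G = (V,E). Then for all distinct vertices v, w ∈ V, the subgraph T[M_v \ M_w] of T induced by the set of max cliques that contain v but not w is connected (where the empty graph is regarded as connected). -/

import Mathlib

open SimpleGraph

/-- A graph is *chordal* if every cycle of length at least 4 has a chord, i.e. an
edge of the graph joining two vertices of the cycle that is not an edge of the cycle. -/
def IsChordal {V : Type*} (G : SimpleGraph V) : Prop :=
  ∀ (v : V) (c : G.Walk v v), c.IsCycle → 4 ≤ c.length →
    ∃ u w : V, u ∈ c.support ∧ w ∈ c.support ∧ G.Adj u w ∧ s(u, w) ∉ c.edges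

/-- A graph is *claw-free* if it has no induced subgraph isomorphic to the
complete bipartite graph `K_{1,3}`. -/
def ClawFree {V : Type*} (G : SimpleGraph V) : Prop :=
  IsEmpty (completeBipartiteGraph (Fin 1) (Fin 3) ↪g G)

/-- A *max clique* of `G` is a maximal clique. -/
def IsMaximalClique {V : Type*} (G : SimpleGraph V) (s : Set V) : Prop :=
  G.IsClique s ∧ ∀ t : Set V, G.IsClique t → s ⊆ t → s = t

/-- The type of max cliques of `G`. -/
abbrev MaxClique {V : Type*} (G : SimpleGraph V) : Type _ :=
  {s : Set V // IsMaximalClique G s}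

/-- `M_v`: the set of max cliques of `G` containing the vertex `v`. -/
def cliquesOf {V : Type*} (G : SimpleGraph V) (v : V) : Set (MaxClique G) :=
  {A | v ∈ A.1}

/-- A *clique tree* of `G`: a tree whose vertices are the max cliques of `G` such
that for every vertex `v` of `G` the subgraph induced by `M_v` is connected. -/
structure IsCliqueTree {V : Type*} (G : SimpleGraph V)
    (T : SimpleGraph (MaxClique G)) : Prop where
  isTree : T.IsTree
  induced_connected : ∀ v : V, (T.induce (cliquesOf G v)).Connected

/-- The subgraph of `T` induced by `S` is a path in `T`: there is a path of `T`
whose vertices are exactly `S` and whose edges are exactly the edges of `T`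
between vertices of `S`. -/
def InducedPath {M : Type*} (T : SimpleGraph M) (S : Set M) : Prop :=
  ∃ (a b : M) (p : T.Walk a b), p.IsPath ∧ (∀ A, A ∈ p.support ↔ A ∈ S) ∧
    ∀ A B, A ∈ S → B ∈ S → (T.Adj A B ↔ s(A, B) ∈ p.edges)

/-- `B` is a *star clique*: every vertex of `B` is contained in at most one
neighbor of `B` in the clique tree `T`. -/
def IsStarClique {V : Type*} (G : SimpleGraph V) (T : SimpleGraph (MaxClique G))
    (B : MaxClique G) : Prop :=
  ∀ v ∈ B.1, ∀ A A' : MaxClique G, T.Adj B A → T.Adj B A' →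
    v ∈ A.1 → v ∈ A'.1 → A = A'

/-- `B` is a *fork clique*: `B` has degree 3 in the clique tree `T`, for every
vertex `v ∈ B` there are two distinct neighbors `A, A'` of `B` with
`M_v = {B, A, A'}`, and for all distinct neighbors `A, A'` of `B` there is a
vertex `v` with `M_v = {B, A, A'}`. -/
def IsForkClique {V : Type*} (G : SimpleGraph V) (T : SimpleGraph (MaxClique G))
    (B : MaxClique G) : Prop :=
  (T.neighborSet B).ncard = 3 ∧
  (∀ v ∈ B.1, ∃ A A' : MaxClique G, A ≠ A' ∧ T.Adj B A ∧ T.Adj B A' ∧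
      cliquesOf G v = {B, A, A'}) ∧
  ∀ A A' : MaxClique G, T.Adj B A → T.Adj B A' → A ≠ A' →
      ∃ v : V, cliquesOf G v = {B, A, A'}

/-- The paths `T[S₁]` and `T[S₂]` *fork in `A`*: there is a fork
`(A', A, {A_P, A_Q})`, i.e. `A', A, A_P` are consecutive vertices of the path
`T[S₁]`, `A', A, A_Q` are consecutive vertices of the path `T[S₂]`,
`A_P` does not occur in `T[S₂]` and `A_Q` does not occur in `T[S₁]`. -/
def ForkAt {M : Type*} (T : SimpleGraph M) (S₁ S₂ : Set M) (A : M) : Prop :=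
  ∃ A' AP AQ : M, A' ∈ S₁ ∧ A' ∈ S₂ ∧ A ∈ S₁ ∧ A ∈ S₂ ∧ AP ∈ S₁ ∧ AQ ∈ S₂ ∧
    T.Adj A' A ∧ T.Adj A AP ∧ T.Adj A AQ ∧ A' ≠ AP ∧ A' ≠ AQ ∧ AP ∉ S₂ ∧ AQ ∉ S₁

/-- `A₁, A₂, A₃` form a *fork triangle* around `B`. -/
def FormsForkTriangle {V : Type*} (G : SimpleGraph V) (T : SimpleGraph (MaxClique G))
    (A₁ A₂ A₃ B : MaxClique G) : Prop :=
  A₁ ≠ A₂ ∧ A₁ ≠ A₃ ∧ A₂ ≠ A₃ ∧ T.Adj B A₁ ∧ T.Adj B A₂ ∧ T.Adj B A₃ ∧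
  (∃ u : V, cliquesOf G u = {A₁, B, A₂}) ∧
  (∃ v : V, cliquesOf G v = {A₂, B, A₃}) ∧
  (∃ w : V, cliquesOf G w = {A₃, B, A₁})

/-- `B` has a fork triangle. -/
def HasForkTriangle {V : Type*} (G : SimpleGraph V) (T : SimpleGraph (MaxClique G))
    (B : MaxClique G) : Prop :=
  ∃ A₁ A₂ A₃ : MaxClique G, FormsForkTriangle G T A₁ A₂ A₃ B

/-- In the tree `T` rooted at `R`, `B` is an ancestor of `A` (equivalently, `A` is
a descendant of `B`): `B` lies on the unique path from `R` to `A`.  Every vertex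
is an ancestor/descendant of itself. -/
def IsAncestor {M : Type*} (T : SimpleGraph M) (R A B : M) : Prop :=
  ∀ p : T.Walk R A, p.IsPath → B ∈ p.support

/-- In the tree `T` rooted at `R`, `A` is a child of `P`. -/
def IsChildOf {M : Type*} (T : SimpleGraph M) (R A P : M) : Prop :=
  T.Adj P A ∧ IsAncestor T R A P

/-- `R` is a leaf of `T`: it has exactly one neighbor. -/
def IsLeaf {M : Type*} (T : SimpleGraph M) (R : M) : Prop :=
  (T.neighborSet R).ncard = 1

/-- The triple `(v₁, v₂, v₃)` *spans* the max clique `A`: `A` is the only max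
clique of `G` containing `v₁`, `v₂` and `v₃`. -/
def Spans {V : Type*} (G : SimpleGraph V) (v₁ v₂ v₃ : V) (A : Set V) : Prop :=
  IsMaximalClique G A ∧ v₁ ∈ A ∧ v₂ ∈ A ∧ v₃ ∈ A ∧
    ∀ B : Set V, IsMaximalClique G B → v₁ ∈ B → v₂ ∈ B → v₃ ∈ B → B = A


section TreeAux

variable {M : Type*} {T : SimpleGraph M}

lemma tree_path_eq (hac : T.IsAcyclic) {a b : M} {p q : T.Walk a b}
    (hp : p.IsPath) (hq : q.IsPath) : p = q :=
  Subtype.ext_iff.mp (hac.path_unique ⟨p, hp⟩ ⟨q, hq⟩)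

lemma tree_path_support_subset (hac : T.IsAcyclic) {a b : M} {p : T.Walk a b}
    (q : T.Walk a b) (hp : p.IsPath) : p.support ⊆ q.support := by
  classical
  rw [tree_path_eq hac hp q.bypass_isPath]
  exact q.support_bypass_subset

lemma tree_mem_or_mem (hac : T.IsAcyclic) {a b c m : M} {p : T.Walk a b}
    (hp : p.IsPath) (hm : m ∈ p.support) (q : T.Walk a c) (r : T.Walk c b) :
    m ∈ q.support ∨ m ∈ r.support := by
  have := tree_path_support_subset hac (q.append r) hp hm
  rwa [SimpleGraph.Walk.mem_support_append_iff] at this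

lemma tree_mem_support_of_adj (hac : T.IsAcyclic) {d c e : M} (h : T.Adj d c)
    {pd : T.Walk d e} {pc : T.Walk c e} (hpd : pd.IsPath) (hpc : pc.IsPath) :
    c ∈ pd.support ∨ d ∈ pc.support := by
  by_cases hc : c ∈ pd.support
  · exact Or.inl hc
  · right
    have hpath : (Walk.cons h.symm pd).IsPath := hpd.cons hc
    rw [tree_path_eq hac hpc hpath]
    simp [Walk.support_cons]

lemma tree_eq_cons_of_mem (hac : T.IsAcyclic) {c d e : M} (h : T.Adj c d)
    {p : T.Walk c e} (hp : p.IsPath) (hd : d ∈ p.support) :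
    ∃ q : T.Walk d e, p = Walk.cons h q := by
  classical
  refine ⟨p.dropUntil d hd, ?_⟩
  have ht : p.takeUntil d hd = Walk.cons h Walk.nil := by
    apply tree_path_eq hac (hp.takeUntil hd)
    simp [Walk.cons_isPath_iff, h.ne]
  conv_lhs => rw [← p.take_spec hd]
  rw [ht, Walk.cons_append, Walk.nil_append]

lemma reachable_induce_of_walk {S : Set M} :
    ∀ {a b : M} (p : T.Walk a b) (hsub : ∀ c ∈ p.support, c ∈ S),
    (T.induce S).Reachable ⟨a, hsub a p.start_mem_support⟩ ⟨b, hsub b p.end_mem_support⟩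
  | _, _, Walk.nil, _ => Reachable.refl _
  | a, b, Walk.cons (v := a') h p, hsub => by
    have hmem : ∀ c ∈ p.support, c ∈ S := fun c hc =>
      hsub c (by rw [Walk.support_cons]; exact List.mem_cons_of_mem _ hc)
    have h1 : (T.induce S).Adj ⟨a, hsub a (Walk.start_mem_support _)⟩
        ⟨a', hmem a' p.start_mem_support⟩ := by
      simpa using h
    exact h1.reachable.trans (reachable_induce_of_walk p hmem)

lemma find_first (P : M → Prop) :
    ∀ {a b : M} (p : T.Walk a b), ¬ P a → (∃ c ∈ p.support, P c) →
    ∃ (d₁ c₁ : M) (h : T.Adj d₁ c₁) (q : T.Walk c₁ b) (p₁ : T.Walk a d₁),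
      ¬ P d₁ ∧ P c₁ ∧ p = p₁.append (Walk.cons h q)
  | a, _, Walk.nil, ha, ⟨c, hc, hPc⟩ => by
    simp only [Walk.support_nil, List.mem_singleton] at hc
    exact absurd (hc ▸ hPc) ha
  | a, b, Walk.cons (v := a') h p, ha, ⟨c, hc, hPc⟩ => by
    classical
    by_cases ha' : P a'
    · exact ⟨a, a', h, p, Walk.nil, ha, ha', by rw [Walk.nil_append]⟩
    · have hc' : c ∈ p.support := by
        rcases (by simpa [Walk.support_cons] using hc : c = a ∨ c ∈ p.support) with rfl | h2
        · exact absurd hPc ha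
        · exact h2
      obtain ⟨d₁, c₁, h₁, q, p₁, hd, hcc, hpe⟩ := find_first P p ha' ⟨c, hc', hPc⟩
      exact ⟨d₁, c₁, h₁, q, Walk.cons h p₁, hd, hcc, by rw [Walk.cons_append, hpe]⟩

lemma find_last (P : M → Prop) :
    ∀ {a b : M} (q : T.Walk a b), P a → ¬ P b →
    ∃ (c₂ d₂ : M) (h : T.Adj c₂ d₂) (q₂ : T.Walk a c₂) (p₃ : T.Walk d₂ b),
      ¬ P d₂ ∧ (∀ x ∈ q₂.support, P x) ∧ q = q₂.append (Walk.cons h p₃)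
  | a, _, Walk.nil, ha, hb => absurd ha hb
  | a, b, Walk.cons (v := a') h q, ha, hb => by
    classical
    by_cases ha' : P a'
    · obtain ⟨c₂, d₂, h₂, q₂, p₃, hd, hall, hqe⟩ := find_last P q ha' hb
      refine ⟨c₂, d₂, h₂, Walk.cons h q₂, p₃, hd, ?_, by rw [Walk.cons_append, hqe]⟩
      intro x hx
      rcases (by simpa [Walk.support_cons] using hx : x = a ∨ x ∈ q₂.support) with rfl | h2
      · exact ha
      · exact hall x h2
    · exact ⟨a, a', h, Walk.nil, q, ha', by simp [ha], by rw [Walk.nil_append]⟩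

end TreeAux

section CliqueAux

variable {V : Type*} [Fintype V] {G : SimpleGraph V}

lemma exists_maxclique_ext {s : Set V} (hs : G.IsClique s) :
    ∃ t : MaxClique G, s ⊆ t.1 := by
  classical
  have hfin : {t : Set V | G.IsClique t ∧ s ⊆ t}.Finite := Set.toFinite _
  obtain ⟨t, ⟨htc, hts⟩, hmax⟩ := hfin.exists_maximal ⟨s, hs, subset_rfl⟩
  refine ⟨⟨t, htc, fun t' ht' htt' => ?_⟩, hts⟩
  exact le_antisymm htt' (hmax ⟨ht', hts.trans htt'⟩ htt')

variable {T : SimpleGraph (MaxClique G)}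

lemma exists_tree_path (hT : IsCliqueTree G T) (a b : MaxClique G) :
    ∃ p : T.Walk a b, p.IsPath := by
  classical
  obtain ⟨W⟩ := hT.isTree.isConnected.preconnected a b
  exact ⟨W.bypass, W.bypass_isPath⟩

lemma mem_of_tree_path (hT : IsCliqueTree G T) {u : V} {a b : MaxClique G} (ha : u ∈ a.1) (hb : u ∈ b.1)
    {p : T.Walk a b} (hp : p.IsPath) : ∀ c ∈ p.support, u ∈ c.1 := by
  obtain ⟨W⟩ := (hT.induced_connected u).preconnected ⟨a, ha⟩ ⟨b, hb⟩
  have hsub := tree_path_support_subset hT.isTree.IsAcyclic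
    (W.map (SimpleGraph.Embedding.induce (cliquesOf G u)).toHom) hp
  intro c hc
  have hc2 := hsub hc
  rw [Walk.support_map] at hc2
  obtain ⟨c', _, rfl⟩ := List.mem_map.mp hc2
  exact c'.2

end CliqueAux


lemma claw_absurd {V : Type*} {G : SimpleGraph V} (hcf : ClawFree G)
    {v w x y : V} (hvw : v ≠ w) (hvx : v ≠ x) (hvy : v ≠ y)
    (hwx : w ≠ x) (hwy : w ≠ y) (hxy : x ≠ y)
    (haw : G.Adj v w) (hax : G.Adj v x) (hay : G.Adj v y)
    (hnwx : ¬ G.Adj w x) (hnwy : ¬ G.Adj w y) (hnxy : ¬ G.Adj x y) : False := by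
  refine hcf.elim ⟨⟨Sum.elim (fun _ => v) ![w, x, y], ?_⟩, ?_⟩
  · have hvg : ∀ j : Fin 3, v ≠ ![w, x, y] j := by
      intro j
      fin_cases j
      · exact hvw
      · exact hvx
      · exact hvy
    have hginj : Function.Injective ![w, x, y] := by
      intro a b h
      fin_cases a <;> fin_cases b <;> simp_all
    rintro (i | j) (i' | j') h
    · simp [Subsingleton.elim i i']
    · exact absurd h (hvg j')
    · exact absurd h.symm (hvg j)
    · exact congrArg (Sum.inr : Fin 3 → Fin 1 ⊕ Fin 3) (hginj h)
  · have hnxw : ¬ G.Adj x w := fun h => hnwx h.symm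
    have hnyw : ¬ G.Adj y w := fun h => hnwy h.symm
    have hnyx : ¬ G.Adj y x := fun h => hnxy h.symm
    have hnn : ∀ j j' : Fin 3, ¬ G.Adj (![w, x, y] j) (![w, x, y] j') := by
      intro j j'
      fin_cases j <;> fin_cases j' <;>
        simp [hnwx, hnwy, hnxy, hnxw, hnyw, hnyx]
    have hva : ∀ j : Fin 3, G.Adj v (![w, x, y] j) := by
      intro j
      fin_cases j
      · exact haw
      · exact hax
      · exact hay
    rintro (i | j) (i' | j')
    · change G.Adj v v ↔ _; simpa using G.irrefl
    · change G.Adj v (![w, x, y] j') ↔ _; simpa using hva j'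
    · change G.Adj (![w, x, y] j) v ↔ _; simpa using (hva j).symm
    · change G.Adj (![w, x, y] j) (![w, x, y] j') ↔ _; simpa using hnn j j'

/-- Let `T` be a clique tree of a chordal claw-free graph `G`.
For all distinct vertices `v, w`, the subgraph of `T` induced by `M_v \ M_w` is
connected (the empty graph being regarded as connected). -/
theorem induced_diff_preconnected {V : Type*} [Fintype V] [Nonempty V]
    (G : SimpleGraph V) (hch : IsChordal G) (hcf : ClawFree G)
    (T : SimpleGraph (MaxClique G)) (hT : IsCliqueTree G T)
    (v w : V) (hvw : v ≠ w) :
    (T.induce (cliquesOf G v \ cliquesOf G w)).Preconnected := by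
  classical
  have hac := hT.isTree.IsAcyclic
  rintro ⟨A, hAv, hAw⟩ ⟨B, hBv, hBw⟩
  obtain ⟨p, hp⟩ := exists_tree_path hT A B
  have hpv : ∀ c ∈ p.support, v ∈ c.1 := mem_of_tree_path hT hAv hBv hp
  by_cases hws : ∀ c ∈ p.support, c ∈ cliquesOf G v \ cliquesOf G w
  · exact reachable_induce_of_walk p hws
  exfalso
  push_neg at hws
  obtain ⟨c, hcp, hc⟩ := hws
  have hcw : w ∈ c.1 := by
    by_contra hcon
    exact hc ⟨hpv c hcp, hcon⟩
  obtain ⟨D₁, C₁, h₁, q, p₁, hD₁w, hC₁w, hpeq⟩ :=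
    find_first (fun C : MaxClique G => w ∈ C.1) p hAw ⟨c, hcp, hcw⟩
  obtain ⟨C₂, D₂, h₂, q₂, p₃, hD₂w, hq₂w, hqeq⟩ :=
    find_last (fun C : MaxClique G => w ∈ C.1) q hC₁w hBw
  rw [hqeq] at hpeq
  -- the path r from D₁ to B
  have hr : (Walk.cons h₁ (q₂.append (Walk.cons h₂ p₃))).IsPath := by
    have := hpeq ▸ hp
    exact this.of_append_right
  -- the middle path m from D₁ to D₂
  have hrm : Walk.cons h₁ (q₂.append (Walk.cons h₂ p₃))
      = (Walk.cons h₁ (q₂.concat h₂)).append p₃ := by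
    rw [Walk.cons_append, Walk.concat_eq_append, ← Walk.append_assoc, Walk.cons_append, Walk.nil_append]
  have hm : (Walk.cons h₁ (q₂.concat h₂)).IsPath := by
    rw [hrm] at hr
    exact hr.of_append_left
  have hme : (q₂.concat h₂).IsPath := (Walk.cons_isPath_iff _ _).mp hm |>.1
  have hD₁nm : D₁ ∉ (q₂.concat h₂).support := (Walk.cons_isPath_iff _ _).mp hm |>.2
  have hD₁D₂ : D₁ ≠ D₂ := fun h => hD₁nm (h ▸ (q₂.concat h₂).end_mem_support)
  have hmc : (Walk.cons h₁ q₂).IsPath := by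
    have h' : Walk.cons h₁ (q₂.concat h₂) = (Walk.cons h₁ q₂).append (Walk.cons h₂ Walk.nil) := by
      simp [Walk.concat_eq_append, Walk.cons_append]
    rw [h'] at hm
    exact hm.of_append_left
  -- support facts
  have hC₁m : C₁ ∈ (Walk.cons h₁ (q₂.concat h₂)).support := by
    rw [Walk.support_cons]
    exact List.mem_cons_of_mem _ (q₂.concat h₂).start_mem_support
  have hC₂me : C₂ ∈ (q₂.concat h₂).support := by
    rw [Walk.concat_eq_append, Walk.mem_support_append_iff]
    exact Or.inl q₂.end_mem_support
  have hC₁mc : C₁ ∈ (Walk.cons h₁ q₂).support := by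
    rw [Walk.support_cons]
    exact List.mem_cons_of_mem _ q₂.start_mem_support
  -- memberships of v
  have hsubp : ∀ x, x ∈ (Walk.cons h₁ (q₂.append (Walk.cons h₂ p₃))).support → x ∈ p.support := by
    intro x hx
    rw [hpeq, Walk.mem_support_append_iff]
    exact Or.inr hx
  have hvD₁ : v ∈ D₁.1 := hpv _ (hsubp _ (Walk.start_mem_support _))
  have hmemr : ∀ z : MaxClique G, z ∈ q₂.support ∨ z ∈ (Walk.cons h₂ p₃).support →
      z ∈ (Walk.cons h₁ (q₂.append (Walk.cons h₂ p₃))).support := by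
    intro z hz
    rw [Walk.support_cons]
    refine List.mem_cons_of_mem _ ?_
    rw [Walk.mem_support_append_iff]
    exact hz
  have hvC₁ : v ∈ C₁.1 := hpv _ (hsubp _ (hmemr _ (Or.inl q₂.start_mem_support)))
  have hvC₂ : v ∈ C₂.1 := hpv _ (hsubp _ (hmemr _ (Or.inl q₂.end_mem_support)))
  have hvD₂ : v ∈ D₂.1 := hpv _ (hsubp _ (hmemr _ (Or.inr (by rw [Walk.support_cons]; exact List.mem_cons_of_mem _ p₃.start_mem_support))))
  -- choose x and y
  have hxex : ∃ x, x ∈ D₁.1 ∧ x ∉ C₁.1 := by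
    by_contra hcon
    push_neg at hcon
    exact h₁.ne (Subtype.ext (D₁.2.2 C₁.1 C₁.2.1 fun z hz => hcon z hz))
  have hyex : ∃ y, y ∈ D₂.1 ∧ y ∉ C₂.1 := by
    by_contra hcon
    push_neg at hcon
    exact h₂.ne' (Subtype.ext (D₂.2.2 C₂.1 C₂.2.1 fun z hz => hcon z hz))
  obtain ⟨x, hxD₁, hxC₁⟩ := hxex
  obtain ⟨y, hyD₂, hyC₂⟩ := hyex
  -- basic distinctness
  have hvx : v ≠ x := fun h => hxC₁ (h ▸ hvC₁)
  have hvy : v ≠ y := fun h => hyC₂ (h ▸ hvC₂)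
  have hwx : w ≠ x := fun h => hxC₁ (h ▸ hC₁w)
  have hC₂w : w ∈ C₂.1 := hq₂w _ q₂.end_mem_support
  have hwy : w ≠ y := fun h => hyC₂ (h ▸ hC₂w)
  have hxy_ne : x ≠ y := by
    rintro rfl
    exact hxC₁ (mem_of_tree_path hT hxD₁ hyD₂ hm _ hC₁m)
  have hAdj_vw : G.Adj v w := C₁.2.1 hvC₁ hC₁w hvw
  have hAdj_vx : G.Adj v x := D₁.2.1 hvD₁ hxD₁ hvx
  have hAdj_vy : G.Adj v y := D₂.2.1 hvD₂ hyD₂ hvy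
  have hnadj : ∀ (z : V) (Dz Cz : MaxClique G), T.Adj Dz Cz → v ∈ Dz.1 → v ∈ Cz.1 →
      z ∈ Dz.1 → z ∉ Cz.1 → w ∈ Cz.1 → w ∉ Dz.1 → ¬ G.Adj w z := by
    intro z Dz Cz hadj hvD hvC hzD hzC hwC hwD hwz
    have hclq : G.IsClique {v, w, z} := by
      intro a ha b hb hab
      simp only [Set.mem_insert_iff, Set.mem_singleton_iff] at ha hb
      rcases ha with rfl | rfl | rfl <;> rcases hb with rfl | rfl | rfl
      · exact absurd rfl hab
      · exact Cz.2.1 hvC hwC hab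
      · exact Dz.2.1 hvD hzD hab
      · exact (Cz.2.1 hvC hwC (Ne.symm hab)).symm
      · exact absurd rfl hab
      · exact hwz
      · exact (Dz.2.1 hvD hzD (Ne.symm hab)).symm
      · exact hwz.symm
      · exact absurd rfl hab
    obtain ⟨E, hE⟩ := exists_maxclique_ext hclq
    have hwE : w ∈ E.1 := hE (by simp)
    have hzE : z ∈ E.1 := hE (by simp)
    obtain ⟨π, hπ⟩ := exists_tree_path hT Dz E
    obtain ⟨π', hπ'⟩ := exists_tree_path hT Cz E
    rcases tree_mem_support_of_adj hac hadj hπ hπ' with h | h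
    · exact hzC (mem_of_tree_path hT hzD hzE hπ _ h)
    · exact hwD (mem_of_tree_path hT hwC hwE hπ' _ h)
  have hAdj_wx : ¬ G.Adj w x := hnadj x D₁ C₁ h₁ hvD₁ hvC₁ hxD₁ hxC₁ hC₁w hD₁w
  have hAdj_wy : ¬ G.Adj w y := hnadj y D₂ C₂ h₂.symm hvD₂ hvC₂ hyD₂ hyC₂ hC₂w hD₂w
  have hAdj_xy : ¬ G.Adj x y := by
    intro hxyadj
    have hclq : G.IsClique {v, x, y} := by
      intro a ha b hb hab
      simp only [Set.mem_insert_iff, Set.mem_singleton_iff] at ha hb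
      rcases ha with rfl | rfl | rfl <;> rcases hb with rfl | rfl | rfl
      · exact absurd rfl hab
      · exact D₁.2.1 hvD₁ hxD₁ hab
      · exact D₂.2.1 hvD₂ hyD₂ hab
      · exact (D₁.2.1 hvD₁ hxD₁ (Ne.symm hab)).symm
      · exact absurd rfl hab
      · exact hxyadj
      · exact (D₂.2.1 hvD₂ hyD₂ (Ne.symm hab)).symm
      · exact hxyadj.symm
      · exact absurd rfl hab
    obtain ⟨E, hE⟩ := exists_maxclique_ext hclq
    have hxE : x ∈ E.1 := hE (by simp)
    have hyE : y ∈ E.1 := hE (by simp)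
    obtain ⟨π₁, hπ₁⟩ := exists_tree_path hT D₁ E
    obtain ⟨π₁', hπ₁'⟩ := exists_tree_path hT C₁ E
    obtain ⟨π₂, hπ₂⟩ := exists_tree_path hT D₂ E
    obtain ⟨π₂', hπ₂'⟩ := exists_tree_path hT C₂ E
    have hD₁π : D₁ ∈ π₁'.support := by
      rcases tree_mem_support_of_adj hac h₁ hπ₁ hπ₁' with h | h
      · exact absurd (mem_of_tree_path hT hxD₁ hxE hπ₁ _ h) hxC₁
      · exact h
    have hD₂π : D₂ ∈ π₂'.support := by
      rcases tree_mem_support_of_adj hac h₂.symm hπ₂ hπ₂' with h | h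
      · exact absurd (mem_of_tree_path hT hyD₂ hyE hπ₂ _ h) hyC₂
      · exact h
    obtain ⟨ρ₁, hρ₁eq⟩ := tree_eq_cons_of_mem hac h₁.symm hπ₁' hD₁π
    obtain ⟨ρ₂, hρ₂eq⟩ := tree_eq_cons_of_mem hac h₂ hπ₂' hD₂π
    have hρ₁ := (Walk.cons_isPath_iff _ _).mp (hρ₁eq ▸ hπ₁')
    have hρ₂ := (Walk.cons_isPath_iff _ _).mp (hρ₂eq ▸ hπ₂')
    rcases tree_mem_or_mem hac hme hC₂me π₁' ρ₂.reverse with h | h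
    · rw [hρ₁eq, Walk.support_cons] at h
      rcases List.mem_cons.mp h with h | h
      · subst h
        have heq := tree_path_eq hac hπ₂' hπ₁'
        rw [hρ₁eq, hρ₂eq] at heq
        have hs := congrArg Walk.support heq
        rw [Walk.support_cons, Walk.support_cons, Walk.support_eq_cons ρ₁,
          Walk.support_eq_cons ρ₂] at hs
        simp only [List.cons.injEq] at hs
        exact hD₁D₂ hs.2.1.symm
      · have hxC₂ : x ∈ C₂.1 := mem_of_tree_path hT hxD₁ hxE hρ₁.1 _ h
        exact hxC₁ (mem_of_tree_path hT hxD₁ hxC₂ hmc _ hC₁mc)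
    · rw [Walk.support_reverse, List.mem_reverse] at h
      exact hρ₂.2 h
  -- build the claw
  exact claw_absurd hcf hvw hvx hvy hwx hwy hxy_ne hAdj_vw hAdj_vx hAdj_vy
    hAdj_wx hAdj_wy hAdj_xy
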